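/- The self-adjoint matrix x = w₀·(I⊗I) + (w·σ)⊗I + I⊗(r·σ), with w₀ ∈ ℝ and w, r ∈ ℝ³, is positive semidefinite if and only if ‖w‖ + ‖r‖ ≤ w₀. -/

import Mathlib

set_option maxHeartbeats 1000000

open Matrix Complex
open scoped ComplexOrder

noncomputable def sigma1 : Matrix (Fin 2) (Fin 2) ℂ := !![0, 1; 1, 0]
noncomputable def sigma2 : Matrix (Fin 2) (Fin 2) ℂ := !![0, -I; I, 0]
noncomputable def sigma3 : Matrix (Fin 2) (Fin 2) ℂ := !![1, 0; 0, -1]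

noncomputable def pauli (w : Fin 3 → ℂ) : Matrix (Fin 2) (Fin 2) ℂ :=
  w 0 • sigma1 + w 1 • sigma2 + w 2 • sigma3

open Kronecker

/-! ### Auxiliary lemmas -/

private lemma cs3 (a c w0 w1 w2 x1 x2 y1 y2 : ℝ) (ha : 0 ≤ a) (haw : w0^2+w1^2+w2^2 = a^2)
    (hac : a ≤ c) :
    0 ≤ c*(x1^2+x2^2+y1^2+y2^2) + w2*(x1^2+x2^2-y1^2-y2^2)
      + 2*w0*(x1*y1+x2*y2) + 2*w1*(x1*y2-x2*y1) := by
  have key : (w2*(x1^2+x2^2-y1^2-y2^2) + 2*w0*(x1*y1+x2*y2) + 2*w1*(x1*y2-x2*y1))^2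
      ≤ a^2 * (x1^2+x2^2+y1^2+y2^2)^2 := by
    nlinarith [sq_nonneg (w0*(x1^2+x2^2-y1^2-y2^2) - w2*2*(x1*y1+x2*y2)),
      sq_nonneg (w1*(x1^2+x2^2-y1^2-y2^2) - w2*2*(x1*y2-x2*y1)),
      sq_nonneg (w0*2*(x1*y2-x2*y1) - w1*2*(x1*y1+x2*y2)),
      sq_nonneg (x1*y1+x2*y2), sq_nonneg (x1*y2-x2*y1)]
  have hn : (0:ℝ) ≤ x1^2+x2^2+y1^2+y2^2 := by positivity
  have h2 : -(a*(x1^2+x2^2+y1^2+y2^2))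
      ≤ w2*(x1^2+x2^2-y1^2-y2^2) + 2*w0*(x1*y1+x2*y2) + 2*w1*(x1*y2-x2*y1) := by
    nlinarith [key, mul_nonneg ha hn]
  nlinarith [mul_le_mul_of_nonneg_right hac hn]

private lemma psd2 (c : ℝ) (w : Fin 3 → ℝ) (h : Real.sqrt (∑ i, w i ^ 2) ≤ c) :
    ((c : ℂ) • (1 : Matrix (Fin 2) (Fin 2) ℂ) + pauli (fun i => (w i : ℂ))).PosSemidef := by
  set a := Real.sqrt (∑ i, w i ^ 2) with hadef
  have ha0 : 0 ≤ a := Real.sqrt_nonneg _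
  have ha2 : a ^ 2 = ∑ i, w i ^ 2 := Real.sq_sqrt (by positivity)
  rw [Fin.sum_univ_three] at ha2
  rw [Matrix.posSemidef_iff_dotProduct_mulVec]
  constructor
  · ext i j
    fin_cases i <;> fin_cases j <;>
      simp [pauli, sigma1, sigma2, sigma3, conjTranspose_apply, Matrix.one_apply,
        Matrix.add_apply, Matrix.smul_apply, Complex.ext_iff]
  · intro v
    have e := cs3 a c (w 0) (w 1) (w 2) (v 0).re (v 0).im (v 1).re (v 1).im ha0
      (by linarith [ha2]) h
    rw [Complex.le_def]
    constructor
    · simp only [mulVec, dotProduct, Fin.sum_univ_two, pauli, sigma1, sigma2, sigma3,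
        Matrix.add_apply, Matrix.smul_apply, Matrix.one_apply, Pi.star_apply]
      simp [Complex.add_re, Complex.mul_re, Complex.mul_im, Complex.ofReal_re, Complex.ofReal_im]
      ring_nf
      ring_nf at e
      linarith [e]
    · simp only [mulVec, dotProduct, Fin.sum_univ_two, pauli, sigma1, sigma2, sigma3,
        Matrix.add_apply, Matrix.smul_apply, Matrix.one_apply, Pi.star_apply]
      simp [Complex.add_im, Complex.mul_re, Complex.mul_im]
      ring

private lemma kron_psd {A B : Matrix (Fin 2) (Fin 2) ℂ} (hA : A.PosSemidef) (hB : B.PosSemidef) :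
    (A ⊗ₖ B).PosSemidef := by
  exact hA.kronecker hB

private lemma one_psd : (1 : Matrix (Fin 2) (Fin 2) ℂ).PosSemidef := by
  simpa using Matrix.posSemidef_conjTranspose_mul_self (1 : Matrix (Fin 2) (Fin 2) ℂ)

private lemma smul_one_psd (c : ℝ) (hc : 0 ≤ c) :
    ((c : ℂ) • (1 : Matrix (Fin 2 × Fin 2) (Fin 2 × Fin 2) ℂ)).PosSemidef := by
  rw [Matrix.posSemidef_iff_dotProduct_mulVec]
  constructor
  · unfold Matrix.IsHermitian
    rw [Matrix.conjTranspose_smul, Matrix.conjTranspose_one]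
    congr 1
    simp
  · intro v
    rw [Matrix.smul_mulVec, Matrix.one_mulVec, dotProduct_smul]
    exact smul_nonneg (Complex.zero_le_real.mpr hc) (dotProduct_star_self_nonneg v)

private lemma exists_evec (w : Fin 3 → ℝ) :
    ∃ u : Fin 2 → ℂ,
      pauli (fun i => (w i : ℂ)) *ᵥ u = (-(Real.sqrt (∑ i, w i ^ 2) : ℂ)) • u
      ∧ 0 < (star u ⬝ᵥ u).re ∧ (star u ⬝ᵥ u).im = 0 := by
  set a := Real.sqrt (∑ i, w i ^ 2) with hadef
  have ha0 : 0 ≤ a := Real.sqrt_nonneg _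
  have ha2s : a ^ 2 = ∑ i, w i ^ 2 := Real.sq_sqrt (by positivity)
  have ha2 := ha2s
  rw [Fin.sum_univ_three] at ha2
  have hC : (a : ℂ) ^ 2 = (w 0 : ℂ)^2 + (w 1 : ℂ)^2 + (w 2 : ℂ)^2 := by exact_mod_cast ha2
  rcases eq_or_lt_of_le ha0 with h0 | h0
  · -- a = 0, so w = 0
    have hw : ∀ i, w i = 0 := by
      intro i
      have hs : ∑ i, w i ^ 2 = 0 := by rw [← ha2s, ← h0]; norm_num
      have := Finset.sum_eq_zero_iff_of_nonneg (fun i _ => sq_nonneg (w i)) |>.mp hs i (by simp)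
      exact pow_eq_zero_iff (n := 2) (by norm_num) |>.mp this
    refine ⟨![1, 0], ?_, ?_, ?_⟩
    · ext i
      fin_cases i <;>
        simp [pauli, sigma1, sigma2, sigma3, Matrix.mulVec, dotProduct,
          Fin.sum_univ_two, hw, ← h0]
    · simp [dotProduct, Fin.sum_univ_two]
    · simp [dotProduct, Fin.sum_univ_two]
  · rcases le_or_gt 0 (w 2) with h2 | h2
    · refine ⟨![(w 0 : ℂ) - I * w 1, -((a : ℂ) + w 2)], ?_, ?_, ?_⟩
      · ext i
        fin_cases i <;>
          simp [pauli, sigma1, sigma2, sigma3, Matrix.mulVec, dotProduct,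
            Fin.sum_univ_two] <;>
          first
            | linear_combination (-2 : ℂ) * hC + (-2 : ℂ) * ((w 1 : ℝ) : ℂ) ^ 2 * Complex.I_sq
            | linear_combination (-2 : ℂ) * hC + (-1 : ℂ) * ((w 1 : ℝ) : ℂ) ^ 2 * Complex.I_sq
            | linear_combination (-2 : ℂ) * hC + (1 : ℂ) * ((w 1 : ℝ) : ℂ) ^ 2 * Complex.I_sq
            | linear_combination (-2 : ℂ) * hC + (2 : ℂ) * ((w 1 : ℝ) : ℂ) ^ 2 * Complex.I_sq
            | linear_combination (-2 : ℂ) * hC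
            | linear_combination (-1 : ℂ) * hC + (-2 : ℂ) * ((w 1 : ℝ) : ℂ) ^ 2 * Complex.I_sq
            | linear_combination (-1 : ℂ) * hC + (-1 : ℂ) * ((w 1 : ℝ) : ℂ) ^ 2 * Complex.I_sq
            | linear_combination (-1 : ℂ) * hC + (1 : ℂ) * ((w 1 : ℝ) : ℂ) ^ 2 * Complex.I_sq
            | linear_combination (-1 : ℂ) * hC + (2 : ℂ) * ((w 1 : ℝ) : ℂ) ^ 2 * Complex.I_sq
            | linear_combination (-1 : ℂ) * hC
            | linear_combination (1 : ℂ) * hC + (-2 : ℂ) * ((w 1 : ℝ) : ℂ) ^ 2 * Complex.I_sq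
            | linear_combination (1 : ℂ) * hC + (-1 : ℂ) * ((w 1 : ℝ) : ℂ) ^ 2 * Complex.I_sq
            | linear_combination (1 : ℂ) * hC + (1 : ℂ) * ((w 1 : ℝ) : ℂ) ^ 2 * Complex.I_sq
            | linear_combination (1 : ℂ) * hC + (2 : ℂ) * ((w 1 : ℝ) : ℂ) ^ 2 * Complex.I_sq
            | linear_combination (1 : ℂ) * hC
            | linear_combination (2 : ℂ) * hC + (-2 : ℂ) * ((w 1 : ℝ) : ℂ) ^ 2 * Complex.I_sq
            | linear_combination (2 : ℂ) * hC + (-1 : ℂ) * ((w 1 : ℝ) : ℂ) ^ 2 * Complex.I_sq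
            | linear_combination (2 : ℂ) * hC + (1 : ℂ) * ((w 1 : ℝ) : ℂ) ^ 2 * Complex.I_sq
            | linear_combination (2 : ℂ) * hC + (2 : ℂ) * ((w 1 : ℝ) : ℂ) ^ 2 * Complex.I_sq
            | linear_combination (2 : ℂ) * hC
            | linear_combination (-2 : ℂ) * ((w 1 : ℝ) : ℂ) ^ 2 * Complex.I_sq
            | linear_combination (-1 : ℂ) * ((w 1 : ℝ) : ℂ) ^ 2 * Complex.I_sq
            | linear_combination (1 : ℂ) * ((w 1 : ℝ) : ℂ) ^ 2 * Complex.I_sq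
            | linear_combination (2 : ℂ) * ((w 1 : ℝ) : ℂ) ^ 2 * Complex.I_sq
            | ring1
      · have hre : (star ![(w 0 : ℂ) - I * w 1, -((a : ℂ) + w 2)] ⬝ᵥ
            ![(w 0 : ℂ) - I * w 1, -((a : ℂ) + w 2)]).re
            = w 0 ^ 2 + w 1 ^ 2 + (a + w 2) ^ 2 := by
          simp [dotProduct, Fin.sum_univ_two, Complex.add_re, Complex.mul_re,
            Complex.mul_im, Complex.normSq]
          ring
        rw [hre]
        nlinarith [ha2, h0, h2]
      · simp [dotProduct, Fin.sum_univ_two, Complex.add_im, Complex.mul_re, Complex.mul_im]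
        ring
    · refine ⟨![(a : ℂ) - w 2, -((w 0 : ℂ) + I * w 1)], ?_, ?_, ?_⟩
      · ext i
        fin_cases i <;>
          simp [pauli, sigma1, sigma2, sigma3, Matrix.mulVec, dotProduct,
            Fin.sum_univ_two] <;>
          first
            | linear_combination (-2 : ℂ) * hC + (-2 : ℂ) * ((w 1 : ℝ) : ℂ) ^ 2 * Complex.I_sq
            | linear_combination (-2 : ℂ) * hC + (-1 : ℂ) * ((w 1 : ℝ) : ℂ) ^ 2 * Complex.I_sq
            | linear_combination (-2 : ℂ) * hC + (1 : ℂ) * ((w 1 : ℝ) : ℂ) ^ 2 * Complex.I_sq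
            | linear_combination (-2 : ℂ) * hC + (2 : ℂ) * ((w 1 : ℝ) : ℂ) ^ 2 * Complex.I_sq
            | linear_combination (-2 : ℂ) * hC
            | linear_combination (-1 : ℂ) * hC + (-2 : ℂ) * ((w 1 : ℝ) : ℂ) ^ 2 * Complex.I_sq
            | linear_combination (-1 : ℂ) * hC + (-1 : ℂ) * ((w 1 : ℝ) : ℂ) ^ 2 * Complex.I_sq
            | linear_combination (-1 : ℂ) * hC + (1 : ℂ) * ((w 1 : ℝ) : ℂ) ^ 2 * Complex.I_sq
            | linear_combination (-1 : ℂ) * hC + (2 : ℂ) * ((w 1 : ℝ) : ℂ) ^ 2 * Complex.I_sq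
            | linear_combination (-1 : ℂ) * hC
            | linear_combination (1 : ℂ) * hC + (-2 : ℂ) * ((w 1 : ℝ) : ℂ) ^ 2 * Complex.I_sq
            | linear_combination (1 : ℂ) * hC + (-1 : ℂ) * ((w 1 : ℝ) : ℂ) ^ 2 * Complex.I_sq
            | linear_combination (1 : ℂ) * hC + (1 : ℂ) * ((w 1 : ℝ) : ℂ) ^ 2 * Complex.I_sq
            | linear_combination (1 : ℂ) * hC + (2 : ℂ) * ((w 1 : ℝ) : ℂ) ^ 2 * Complex.I_sq
            | linear_combination (1 : ℂ) * hC
            | linear_combination (2 : ℂ) * hC + (-2 : ℂ) * ((w 1 : ℝ) : ℂ) ^ 2 * Complex.I_sq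
            | linear_combination (2 : ℂ) * hC + (-1 : ℂ) * ((w 1 : ℝ) : ℂ) ^ 2 * Complex.I_sq
            | linear_combination (2 : ℂ) * hC + (1 : ℂ) * ((w 1 : ℝ) : ℂ) ^ 2 * Complex.I_sq
            | linear_combination (2 : ℂ) * hC + (2 : ℂ) * ((w 1 : ℝ) : ℂ) ^ 2 * Complex.I_sq
            | linear_combination (2 : ℂ) * hC
            | linear_combination (-2 : ℂ) * ((w 1 : ℝ) : ℂ) ^ 2 * Complex.I_sq
            | linear_combination (-1 : ℂ) * ((w 1 : ℝ) : ℂ) ^ 2 * Complex.I_sq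
            | linear_combination (1 : ℂ) * ((w 1 : ℝ) : ℂ) ^ 2 * Complex.I_sq
            | linear_combination (2 : ℂ) * ((w 1 : ℝ) : ℂ) ^ 2 * Complex.I_sq
            | ring1
      · have hre : (star ![(a : ℂ) - w 2, -((w 0 : ℂ) + I * w 1)] ⬝ᵥ
            ![(a : ℂ) - w 2, -((w 0 : ℂ) + I * w 1)]).re
            = (a - w 2) ^ 2 + w 0 ^ 2 + w 1 ^ 2 := by
          simp [dotProduct, Fin.sum_univ_two, Complex.add_re, Complex.mul_re,
            Complex.mul_im, Complex.normSq]
          ring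
        rw [hre]
        nlinarith [h0, h2]
      · simp [dotProduct, Fin.sum_univ_two, Complex.add_im, Complex.mul_re, Complex.mul_im]
        ring

private lemma quad_eq (W R : Matrix (Fin 2) (Fin 2) ℂ) (c : ℂ) (u s : Fin 2 → ℂ)
    (α β : ℂ) (hW : W *ᵥ u = α • u) (hR : R *ᵥ s = β • s) :
    star (fun p : Fin 2 × Fin 2 => u p.1 * s p.2) ⬝ᵥ
      ((c • ((1 : Matrix (Fin 2) (Fin 2) ℂ) ⊗ₖ (1 : Matrix (Fin 2) (Fin 2) ℂ))
        + W ⊗ₖ 1 + 1 ⊗ₖ R) *ᵥ (fun p => u p.1 * s p.2))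
      = (c + α + β) * ((star u ⬝ᵥ u) * (star s ⬝ᵥ s)) := by
  have hW0 := congrFun hW 0
  have hW1 := congrFun hW 1
  have hR0 := congrFun hR 0
  have hR1 := congrFun hR 1
  simp only [Matrix.mulVec, dotProduct, Fin.sum_univ_two, Pi.smul_apply,
    smul_eq_mul] at hW0 hW1 hR0 hR1
  simp only [dotProduct, Matrix.mulVec, Matrix.add_apply, Matrix.smul_apply,
    Fintype.sum_prod_type, Fin.sum_univ_two, Matrix.kroneckerMap_apply, Matrix.one_apply,
    Pi.star_apply, smul_eq_mul, star_mul', Complex.star_def]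
  simp only [Fin.isValue, ite_true, ite_false, if_true, if_false, one_ne_zero, zero_ne_one,
    mul_one, mul_zero, add_zero, zero_add, reduceIte]
  linear_combination
    (starRingEnd ℂ (u 0) * (starRingEnd ℂ (s 0) * s 0 + starRingEnd ℂ (s 1) * s 1)) * hW0
    + (starRingEnd ℂ (u 1) * (starRingEnd ℂ (s 0) * s 0 + starRingEnd ℂ (s 1) * s 1)) * hW1
    + ((starRingEnd ℂ (u 0) * u 0 + starRingEnd ℂ (u 1) * u 1) * starRingEnd ℂ (s 0)) * hR0
    + ((starRingEnd ℂ (u 0) * u 0 + starRingEnd ℂ (u 1) * u 1) * starRingEnd ℂ (s 1)) * hR1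

theorem stmt_5 (w₀ : ℝ) (w r : Fin 3 → ℝ) :
    ((w₀ : ℂ) • ((1 : Matrix (Fin 2) (Fin 2) ℂ) ⊗ₖ (1 : Matrix (Fin 2) (Fin 2) ℂ))
        + pauli (fun i => (w i : ℂ)) ⊗ₖ (1 : Matrix (Fin 2) (Fin 2) ℂ)
        + (1 : Matrix (Fin 2) (Fin 2) ℂ) ⊗ₖ pauli (fun i => (r i : ℂ))).PosSemidef ↔
      Real.sqrt (∑ i, w i ^ 2) + Real.sqrt (∑ i, r i ^ 2) ≤ w₀ := by
  set a := Real.sqrt (∑ i, w i ^ 2) with hadef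
  set b := Real.sqrt (∑ i, r i ^ 2) with hbdef
  have ha0 : 0 ≤ a := Real.sqrt_nonneg _
  have hb0 : 0 ≤ b := Real.sqrt_nonneg _
  constructor
  · intro h
    obtain ⟨u, hu, hure, huim⟩ := exists_evec w
    obtain ⟨s, hs, hsre, hsim⟩ := exists_evec r
    have hq := h.dotProduct_mulVec_nonneg (fun p : Fin 2 × Fin 2 => u p.1 * s p.2)
    rw [quad_eq (pauli fun i => (w i : ℂ)) (pauli fun i => (r i : ℂ)) (w₀ : ℂ) u s
      (-(a : ℂ)) (-(b : ℂ)) hu hs] at hq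
    rw [Complex.le_def] at hq
    have hre := hq.1
    simp only [Complex.mul_re, Complex.mul_im, Complex.add_re, Complex.add_im,
      Complex.neg_re, Complex.neg_im, Complex.ofReal_re, Complex.ofReal_im, Complex.zero_re,
      huim, hsim, mul_zero, zero_mul, sub_zero, add_zero, zero_add, neg_zero, zero_sub,
      neg_neg] at hre
    have hpos : 0 < (star u ⬝ᵥ u).re * (star s ⬝ᵥ s).re := mul_pos hure hsre
    nlinarith [hre, hpos]
  · intro h
    have hdecomp :
        (w₀ : ℂ) • ((1 : Matrix (Fin 2) (Fin 2) ℂ) ⊗ₖ (1 : Matrix (Fin 2) (Fin 2) ℂ))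
            + pauli (fun i => (w i : ℂ)) ⊗ₖ (1 : Matrix (Fin 2) (Fin 2) ℂ)
            + (1 : Matrix (Fin 2) (Fin 2) ℂ) ⊗ₖ pauli (fun i => (r i : ℂ))
          = ((w₀ - a - b : ℝ) : ℂ) • ((1 : Matrix (Fin 2) (Fin 2) ℂ) ⊗ₖ 1)
            + ((a : ℂ) • 1 + pauli (fun i => (w i : ℂ))) ⊗ₖ (1 : Matrix (Fin 2) (Fin 2) ℂ)
            + (1 : Matrix (Fin 2) (Fin 2) ℂ) ⊗ₖ ((b : ℂ) • 1 + pauli (fun i => (r i : ℂ))) := by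
      rw [Matrix.add_kronecker, Matrix.kronecker_add, Matrix.smul_kronecker,
        Matrix.kronecker_smul]
      push_cast
      module
    rw [hdecomp]
    have h1 : (((w₀ - a - b : ℝ) : ℂ) •
        ((1 : Matrix (Fin 2) (Fin 2) ℂ) ⊗ₖ (1 : Matrix (Fin 2) (Fin 2) ℂ))).PosSemidef := by
      rw [Matrix.one_kronecker_one]
      exact smul_one_psd _ (by linarith)
    have h2 := kron_psd (psd2 a w le_rfl) one_psd
    have h3 := kron_psd one_psd (psd2 b r le_rfl)
    exact (h1.add h2).add h3
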